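/- arXiv:1712.03233 — 3 statements merged into one kernel-verified Lean document; each statement's English description precedes it below -/
import Mathlib

section
/- The formal power series identity Σ_{k≥1} k x^k ∏_{j>k}(1-x^j) = Σ_{k≥1} x^k/(1-x^k) holds. -/
open Filter Finset Topology

noncomputable section
namespace Uch

def cq (x : ℝ) : ℕ → ℕ → ℝ
  | _, 0 => 1
  | 0, _+1 => 0
  | n+1, k+1 => cq x n (k+1) + x^(n-k) * cq x n k

def tri (r : ℕ) : ℕ := ∑ i ∈ Finset.range (r+1), i

def P (x : ℝ) (k : ℕ) : ℝ := ∏ i ∈ Finset.range k, (1 - x^(i+1))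

def N (x : ℝ) (n k : ℕ) : ℝ := ∏ i ∈ Finset.range k, (1 - x^(n-i))


def eOne : ℕ ≃ {k : ℕ // 1 ≤ k} where
  toFun n := ⟨n+1, by omega⟩
  invFun k := k.1 - 1
  left_inv n := by show (n+1) - 1 = n; omega
  right_inv k := Subtype.ext (by show (k.1 - 1) + 1 = k.1; have := k.2; omega)

def eAbove (k : ℕ) : ℕ ≃ {j : ℕ // k < j} where
  toFun i := ⟨k+1+i, by omega⟩
  invFun j := j.1 - (k+1)
  left_inv i := by show (k+1+i) - (k+1) = i; omega
  right_inv j := Subtype.ext (by show (k+1) + (j.1 - (k+1)) = j.1; have := j.2; omega)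

variable {x : ℝ}

lemma tri_succ (r : ℕ) : tri (r+1) = tri r + (r+1) := Finset.sum_range_succ _ _

lemma P_succ (k : ℕ) : P x (k+1) = P x k * (1 - x^(k+1)) := Finset.prod_range_succ _ _

@[simp] lemma cq_zero (n : ℕ) : cq x n 0 = 1 := by cases n <;> rfl

lemma cq_succ (n k : ℕ) : cq x (n+1) (k+1) = cq x n (k+1) + x^(n-k) * cq x n k := rfl

lemma cq_eq_zero : ∀ n k, n < k → cq x n k = 0 := by
  intro n
  induction n with
  | zero => intro k hk; match k, hk with | k+1, _ => rfl
  | succ n ih =>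
    intro k hk
    match k, hk with
    | k+1, hk =>
      rw [cq_succ, ih (k+1) (by omega), ih k (by omega)]
      ring

lemma N_succ_top (n k : ℕ) (hk : k ≤ n) : N x (n+1) (k+1) = (1 - x^(n+1)) * N x n k := by
  rw [N, Finset.prod_range_succ', N]
  have h1 : ∀ i ∈ Finset.range k, (1 - x^(n+1-(i+1))) = (1 - x^(n-i)) := by
    intro i hi; congr 2; omega
  rw [Finset.prod_congr rfl h1, Nat.sub_zero, mul_comm]

lemma cq_mul_P : ∀ n k, k ≤ n → cq x n k * P x k = N x n k := by
  intro n
  induction n with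
  | zero => intro k hk; interval_cases k; simp [N, P]
  | succ n ih =>
    intro k hk
    match k with
    | 0 => simp [N, P]
    | k+1 =>
      have hk' : k ≤ n := by omega
      rw [cq_succ, N_succ_top (x := x) n k hk', P_succ]
      rcases Nat.lt_or_ge k n with h | h
      · have ih1 := ih (k+1) (by omega)
        have ih2 := ih k hk'
        have hNsplit : N x n (k+1) = N x n k * (1 - x^(n-k)) := Finset.prod_range_succ _ _
        have hpow : x^(n-k) * x^(k+1) = x^(n+1) := by
          rw [← pow_add]; congr 1; omega
        rw [P_succ] at ih1
        linear_combination ih1 + x^(n-k)*(1-x^(k+1))*ih2 + hNsplit - N x n k * hpow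
      · have hkn : k = n := by omega
        subst hkn
        rw [cq_eq_zero k (k+1) (by omega)]
        have ih2 := ih k le_rfl
        have : (k:ℕ) - k = 0 := by omega
        rw [this, pow_zero]
        linear_combination (1-x^(k+1))*ih2

lemma abs_log_one_sub_le {t : ℝ} (h : |t| ≤ 1/2) : |Real.log (1 - t)| ≤ 2*|t| := by
  obtain ⟨h1, h2⟩ := abs_le.mp h
  have hpos : 0 < 1 - t := by linarith
  have hhalf : (1:ℝ)/2 ≤ 1 - t := by linarith
  have hub : Real.log (1 - t) ≤ 2*|t| := by
    calc Real.log (1-t) ≤ (1-t) - 1 := Real.log_le_sub_one_of_pos hpos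
    _ = -t := by ring
    _ ≤ |t| := neg_le_abs t
    _ ≤ 2*|t| := by nlinarith [abs_nonneg t]
  have hlb : -(2*|t|) ≤ Real.log (1 - t) := by
    have hinv : Real.log ((1-t)⁻¹) ≤ (1-t)⁻¹ - 1 :=
      Real.log_le_sub_one_of_pos (inv_pos.mpr hpos)
    rw [Real.log_inv] at hinv
    have hinv2 : (1-t)⁻¹ ≤ 2 := by
      have := inv_anti₀ (by norm_num : (0:ℝ) < 1/2) hhalf
      norm_num at this; linarith
    have hid : (1-t)⁻¹ - 1 = t * (1-t)⁻¹ := by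
      field_simp
      ring
    have : (1-t)⁻¹ - 1 ≤ 2*|t| := by
      rw [hid]
      calc t * (1-t)⁻¹ ≤ |t * (1-t)⁻¹| := le_abs_self _
      _ = |t| * |(1-t)⁻¹| := abs_mul _ _
      _ = |t| * (1-t)⁻¹ := by rw [abs_of_pos (inv_pos.mpr hpos)]
      _ ≤ |t| * 2 := by nlinarith [abs_nonneg t]
      _ = 2*|t| := by ring
    linarith
  exact abs_le.mpr ⟨hlb, hub⟩


section Bounds
variable (hx : |x| < 1)
include hx

lemma abs_pow_le_abs {j : ℕ} (hj : 1 ≤ j) : |x^j| ≤ |x| := by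
  rw [abs_pow]
  calc |x|^j ≤ |x|^1 := pow_le_pow_of_le_one (abs_nonneg x) hx.le hj
  _ = |x| := pow_one _

lemma one_sub_pow_pos {j : ℕ} (hj : 1 ≤ j) : 0 < 1 - x^j := by
  have h1 : x^j ≤ |x^j| := le_abs_self _
  have := abs_pow_le_abs hx hj
  linarith

lemma one_sub_pow_ne {j : ℕ} (hj : 1 ≤ j) : (1 : ℝ) - x^j ≠ 0 :=
  (one_sub_pow_pos hx hj).ne'

lemma one_sub_pow_ge {j : ℕ} (hj : 1 ≤ j) : 1 - |x| ≤ 1 - x^j := by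
  have h1 : x^j ≤ |x^j| := le_abs_self _
  have := abs_pow_le_abs hx hj
  linarith

lemma abs_one_sub_pow_le (j : ℕ) : |1 - x^j| ≤ 2 := by
  have h1 : |x^j| ≤ 1 := by rw [abs_pow]; exact pow_le_one₀ (abs_nonneg x) hx.le
  calc |1 - x^j| ≤ |1| + |x^j| := abs_sub _ _
  _ ≤ 2 := by rw [abs_one]; linarith

lemma P_pos (k : ℕ) : 0 < P x k :=
  Finset.prod_pos fun i _ => one_sub_pow_pos hx (by omega)

lemma P_ge (k : ℕ) : (1 - |x|)^k ≤ P x k := by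
  rw [P]
  have : (1-|x|)^k = ∏ _i ∈ Finset.range k, (1-|x|) := by
    rw [Finset.prod_const, Finset.card_range]
  rw [this]
  exact Finset.prod_le_prod (fun i _ => by linarith) (fun i _ => one_sub_pow_ge hx (by omega))

lemma N_abs_le (n k : ℕ) : |N x n k| ≤ 2^k := by
  rw [N, Finset.abs_prod]
  have : (2:ℝ)^k = ∏ _i ∈ Finset.range k, (2:ℝ) := by
    rw [Finset.prod_const, Finset.card_range]
  rw [this]
  exact Finset.prod_le_prod (fun i _ => abs_nonneg _) (fun i _ => abs_one_sub_pow_le hx _)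

lemma N_tendsto (k : ℕ) : Tendsto (fun n => N x n k) atTop (𝓝 1) := by
  have h : Tendsto (fun n => N x n k) atTop (𝓝 (∏ i ∈ Finset.range k, (1:ℝ))) := by
    apply tendsto_finset_prod
    intro i _
    have h0 : Tendsto (fun n : ℕ => x^(n-i)) atTop (𝓝 0) :=
      (tendsto_pow_atTop_nhds_zero_of_abs_lt_one hx).comp (tendsto_sub_atTop_nat i)
    have := h0.const_sub 1
    simpa using this
  simpa using h

lemma cq_eq_div {n k : ℕ} (hk : k ≤ n) : cq x n k = N x n k / P x k := by
  rw [← cq_mul_P n k hk, mul_div_assoc, div_self (P_pos hx k).ne', mul_one]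

lemma cq_abs_le (n k : ℕ) : |cq x n k| ≤ (2/(1-|x|))^k := by
  have h1 : (0:ℝ) < 1 - |x| := by linarith [abs_nonneg x]
  rcases Nat.lt_or_ge n k with h | h
  · rw [cq_eq_zero n k h, abs_zero]
    exact pow_nonneg (le_of_lt (div_pos two_pos h1)) k
  · rw [cq_eq_div hx h, abs_div, div_pow, abs_of_pos (P_pos hx k)]
    exact div_le_div₀ (by positivity) (N_abs_le hx n k) (pow_pos h1 k) (P_ge hx k)

lemma cq_tendsto (k : ℕ) : Tendsto (fun n => cq x n k) atTop (𝓝 ((P x k)⁻¹)) := by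
  have hev : ∀ᶠ n in atTop, cq x n k = N x n k / P x k := by
    filter_upwards [eventually_ge_atTop k] with n hn
    exact cq_eq_div hx hn
  have h : Tendsto (fun n => N x n k / P x k) atTop (𝓝 (1 / P x k)) :=
    (N_tendsto hx k).div_const _
  rw [one_div] at h
  exact h.congr' (hev.mono fun n hn => hn.symm)

end Bounds

lemma FQB : ∀ (n : ℕ) (z : ℝ), ∏ i ∈ Finset.range n, (1 - z * x^(i+1)) =
    ∑ r ∈ Finset.range (n+1), (-1)^r * cq x n r * x^(tri r) * z^r := by
  intro n
  induction n with
  | zero => intro z; simp [tri]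
  | succ n ih =>
    intro z
    set t : ℕ → ℝ := fun r => (-1)^r * cq x n r * x^(tri r) * z^r with ht
    have key : ∑ r ∈ Finset.range (n+2), (-1)^r * cq x (n+1) r * x^(tri r) * z^r
        = (∑ r ∈ Finset.range (n+1), t r) * (1 - z*x^(n+1)) := by
      rw [Finset.sum_range_succ' (fun r => (-1)^r * cq x (n+1) r * x^(tri r) * z^r) (n+1)]
      have h1 : ∀ i ∈ Finset.range (n+1),
          (-1)^(i+1) * cq x (n+1) (i+1) * x^(tri (i+1)) * z^(i+1)
          = t (i+1) + (-(z*x^(n+1))) * t i := by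
        intro i hi
        rw [Finset.mem_range] at hi
        have hpow : x^(n-i) * x^(tri (i+1)) = x^(tri i) * x^(n+1) := by
          rw [← pow_add, ← pow_add, tri_succ]; congr 1; omega
        rw [cq_succ]
        simp only [ht]
        linear_combination ((-1:ℝ)^(i+1) * cq x n i * z^(i+1)) * hpow
      rw [Finset.sum_congr rfl h1, Finset.sum_add_distrib]
      have h2 : ∑ i ∈ Finset.range (n+1), t (i+1) = (∑ r ∈ Finset.range (n+1), t r) - t 0 := by
        have h3 : ∑ r ∈ Finset.range (n+2), t r = (∑ i ∈ Finset.range (n+1), t (i+1)) + t 0 :=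
          Finset.sum_range_succ' t (n+1)
        have h4 : ∑ r ∈ Finset.range (n+2), t r = (∑ r ∈ Finset.range (n+1), t r) + t (n+1) :=
          Finset.sum_range_succ t (n+1)
        have h5 : t (n+1) = 0 := by
          rw [ht]; simp only []; rw [cq_eq_zero n (n+1) (by omega)]; ring
        rw [h5, add_zero] at h4
        rw [h4] at h3; linarith
      have h6 : ∑ i ∈ Finset.range (n+1), (-(z*x^(n+1))) * t i
          = (-(z*x^(n+1))) * ∑ r ∈ Finset.range (n+1), t r := (Finset.mul_sum _ _ _).symm
      have h7 : t 0 = 1 := by rw [ht]; simp [tri]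
      have h8 : (-1:ℝ)^0 * cq x (n+1) 0 * x^(tri 0) * z^0 = 1 := by simp [tri]
      rw [h2, h6, h8, h7]
      ring
    rw [Finset.prod_range_succ, ih, key]

section PFsec
variable (hx : |x| < 1)
include hx

lemma prod_den_ne (n m : ℕ) (hm : 1 ≤ m) :
    (∏ j ∈ Finset.range n, (1 - x^(m+j))) ≠ 0 :=
  Finset.prod_ne_zero_iff.mpr fun j _ => one_sub_pow_ne hx (by omega)

lemma PF : ∀ n m, 1 ≤ m →
    ∑ k ∈ Finset.range (n+1), (-1)^k * cq x n k * x^(tri k) / (1 - x^(m+k))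
      = P x n / ∏ j ∈ Finset.range (n+1), (1 - x^(m+j)) := by
  intro n
  induction n with
  | zero =>
    intro m hm
    simp [tri, P]
  | succ n ih =>
    intro m hm
    set a : ℕ → ℝ := fun k => (-1)^k * cq x n k * x^(tri k) / (1 - x^(m+k)) with ha
    set b : ℕ → ℝ := fun k => (-1)^k * cq x n k * x^(tri k) / (1 - x^((m+1)+k)) with hb
    have hsplit : ∑ k ∈ Finset.range (n+2), (-1)^k * cq x (n+1) k * x^(tri k) / (1 - x^(m+k))
        = (∑ k ∈ Finset.range (n+1), a k) - x^(n+1) * ∑ k ∈ Finset.range (n+1), b k := by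
      rw [Finset.sum_range_succ'
        (fun k => (-1)^k * cq x (n+1) k * x^(tri k) / (1 - x^(m+k))) (n+1)]
      have h1 : ∀ i ∈ Finset.range (n+1),
          (-1)^(i+1) * cq x (n+1) (i+1) * x^(tri (i+1)) / (1 - x^(m+(i+1)))
            = a (i+1) + (-(x^(n+1))) * b i := by
        intro i hi
        rw [Finset.mem_range] at hi
        have hpow : x^(n-i) * x^(tri (i+1)) = x^(tri i) * x^(n+1) := by
          rw [← pow_add, ← pow_add, tri_succ]; congr 1; omega
        have hmi : m + (i+1) = (m+1) + i := by omega
        rw [cq_succ]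
        simp only [ha, hb]
        rw [hmi]
        have hd : (1:ℝ) - x^((m+1)+i) ≠ 0 := one_sub_pow_ne hx (by omega)
        field_simp
        linear_combination ((-1:ℝ)^(i+1) * cq x n i) * hpow
      rw [Finset.sum_congr rfl h1, Finset.sum_add_distrib]
      have h2 : ∑ i ∈ Finset.range (n+1), a (i+1) = (∑ k ∈ Finset.range (n+1), a k) - a 0 := by
        have h3 := Finset.sum_range_succ' a (n+1)
        have h4 := Finset.sum_range_succ a (n+1)
        have h5 : a (n+1) = 0 := by
          simp only [ha]; rw [cq_eq_zero n (n+1) (by omega)]; ring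
        rw [h5, add_zero] at h4
        rw [h4] at h3; linarith
      have h6 : ∑ i ∈ Finset.range (n+1), (-(x^(n+1))) * b i
          = (-(x^(n+1))) * ∑ k ∈ Finset.range (n+1), b k := (Finset.mul_sum _ _ _).symm
      have h8 : (-1:ℝ)^0 * cq x (n+1) 0 * x^(tri 0) / (1 - x^(m+0)) = a 0 := by
        simp only [ha]; simp [tri]
      rw [h2, h6, h8]
      ring
    rw [hsplit, ih m hm, ih (m+1) (by omega)]
    have hDm : (∏ j ∈ Finset.range (n+1), (1 - x^(m+j))) ≠ 0 := prod_den_ne hx _ _ hm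
    have hDm1 : (∏ j ∈ Finset.range (n+1), (1 - x^((m+1)+j))) ≠ 0 := prod_den_ne hx _ _ (by omega)
    have hD' : ∏ j ∈ Finset.range (n+2), (1 - x^(m+j))
        = (∏ j ∈ Finset.range (n+1), (1 - x^(m+j))) * (1 - x^(m+(n+1))) :=
      Finset.prod_range_succ _ _
    have hD'' : ∏ j ∈ Finset.range (n+2), (1 - x^(m+j))
        = (1 - x^m) * ∏ j ∈ Finset.range (n+1), (1 - x^((m+1)+j)) := by
      rw [Finset.prod_range_succ' (fun j => 1 - x^(m+j)) (n+1)]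
      have : ∀ j ∈ Finset.range (n+1), (1 - x^(m+(j+1))) = (1 - x^((m+1)+j)) := by
        intro j _; congr 2; omega
      rw [Finset.prod_congr rfl this]
      norm_num [mul_comm]
    have hP : P x (n+1) = P x n * (1 - x^(n+1)) := P_succ _
    have hpw : x^(n+1) * x^m = x^(m+(n+1)) := by rw [← pow_add]; congr 1; omega
    have hD'ne : (∏ j ∈ Finset.range (n+2), (1 - x^(m+j))) ≠ 0 := prod_den_ne hx _ _ hm
    set A := P x n with hA
    set Dm := ∏ j ∈ Finset.range (n+1), (1 - x^(m+j)) with hDmdef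
    set Dm1 := ∏ j ∈ Finset.range (n+1), (1 - x^((m+1)+j)) with hDm1def
    set D' := ∏ j ∈ Finset.range (n+2), (1 - x^(m+j)) with hD'def
    rw [hP, mul_div_assoc', div_sub_div _ _ hDm hDm1,
      div_eq_div_iff (mul_ne_zero hDm hDm1) hD'ne]
    linear_combination (A*Dm1)*hD' - (Dm*x^(n+1)*A)*hD'' + (A*Dm*Dm1)*hpw
  
lemma AUX (n : ℕ) :
    ∑ k ∈ Finset.range (n+1), (-1)^k * cq x n k * x^(tri k) / (1 - x^(1+k))
      = 1 / (1 - x^(n+1)) := by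
  have h := PF hx n 1 le_rfl
  have hprod : (∏ j ∈ Finset.range (n+1), (1 - x^(1+j))) = P x (n+1) := by
    rw [P]
    exact Finset.prod_congr rfl fun j _ => by rw [Nat.add_comm 1 j]
  rw [h, hprod, P_succ]
  rw [div_mul_eq_div_div, div_self (P_pos hx n).ne']

lemma VH : ∀ n : ℕ,
    ∑ i ∈ Finset.range n, (-1)^i * cq x n (i+1) * x^(tri (i+1)) / (1 - x^(i+1))
      = ∑ i ∈ Finset.range n, x^(i+1) / (1 - x^(i+1)) := by
  intro n
  induction n with
  | zero => simp
  | succ n ih =>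
    have h1 : ∀ i ∈ Finset.range (n+1),
        (-1)^i * cq x (n+1) (i+1) * x^(tri (i+1)) / (1 - x^(i+1))
          = (-1)^i * cq x n (i+1) * x^(tri (i+1)) / (1 - x^(i+1))
            + x^(n+1) * ((-1)^i * cq x n i * x^(tri i) / (1 - x^(i+1))) := by
      intro i hi
      rw [Finset.mem_range] at hi
      have hpow : x^(n-i) * x^(tri (i+1)) = x^(tri i) * x^(n+1) := by
        rw [← pow_add, ← pow_add, tri_succ]; congr 1; omega
      rw [cq_succ]
      have hd : (1:ℝ) - x^(i+1) ≠ 0 := one_sub_pow_ne hx (by omega)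
      field_simp
      linear_combination (cq x n i) * hpow
    rw [Finset.sum_congr rfl h1, Finset.sum_add_distrib]
    have h2 : ∑ i ∈ Finset.range (n+1),
        x^(n+1) * ((-1)^i * cq x n i * x^(tri i) / (1 - x^(i+1)))
        = x^(n+1) * (1 / (1 - x^(n+1))) := by
      have : ∀ i ∈ Finset.range (n+1),
          x^(n+1) * ((-1)^i * cq x n i * x^(tri i) / (1 - x^(i+1)))
          = x^(n+1) * ((-1)^i * cq x n i * x^(tri i) / (1 - x^(1+i))) := by
        intro i _; rw [Nat.add_comm i 1]
      rw [Finset.sum_congr rfl this, ← Finset.mul_sum, AUX hx n]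
    have h3 : ∑ i ∈ Finset.range (n+1), (-1)^i * cq x n (i+1) * x^(tri (i+1)) / (1 - x^(i+1))
        = ∑ i ∈ Finset.range n, (-1)^i * cq x n (i+1) * x^(tri (i+1)) / (1 - x^(i+1)) := by
      rw [Finset.sum_range_succ, cq_eq_zero n (n+1) (by omega)]
      simp
    rw [h2, h3, ih, Finset.sum_range_succ]
    ring

lemma summable_MB (M : ℝ) (hM : 0 ≤ M) :
    Summable (fun r : ℕ => M^r * |x|^(tri r)) := by
  apply summable_of_ratio_norm_eventually_le (r := 1/2) (by norm_num)
  have hxx : |(|x|)| < 1 := by rwa [abs_abs]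
  have h0 : Tendsto (fun r : ℕ => M * |x|^(r+1)) atTop (𝓝 (M * 0)) :=
    ((tendsto_pow_atTop_nhds_zero_of_abs_lt_one hxx).comp (tendsto_add_atTop_nat 1)).const_mul M
  rw [mul_zero] at h0
  filter_upwards [h0.eventually (gt_mem_nhds (by norm_num : (0:ℝ) < 1/2))] with r hr
  have he : M^(r+1) * |x|^(tri (r+1)) = (M^r * |x|^(tri r)) * (M * |x|^(r+1)) := by
    rw [tri_succ, pow_add, pow_succ]; ring
  have hnn : 0 ≤ M^r * |x|^(tri r) := by positivity
  have h3 : 0 ≤ M * |x|^(r+1) := by positivity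
  rw [Real.norm_eq_abs, Real.norm_eq_abs, he, abs_mul]
  rw [abs_of_nonneg hnn, abs_of_nonneg h3]
  nlinarith [hnn, h3, hr]

lemma log_summable (k : ℕ) : Summable (fun i : ℕ => Real.log (1 - x^(k+1+i))) := by
  have h1 : (0:ℝ) < 1 - |x| := by linarith [abs_nonneg x]
  have hxx : |(|x|)| < 1 := by rwa [abs_abs]
  apply Summable.of_norm_bounded_eventually_nat (g := fun i => 2 * (|x|^(k+1) * |x|^i))
  · exact ((summable_geometric_of_lt_one (abs_nonneg x) hx).mul_left _).mul_left 2
  · have h0 : Tendsto (fun i : ℕ => |x|^(k+1+i)) atTop (𝓝 0) := by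
      have := (tendsto_pow_atTop_nhds_zero_of_abs_lt_one hxx).comp (tendsto_add_atTop_nat (k+1))
      refine this.congr fun i => ?_
      simp [Nat.add_comm]
    filter_upwards [h0.eventually (gt_mem_nhds (by norm_num : (0:ℝ) < 1/2))] with i hi
    have habs : |x^(k+1+i)| = |x|^(k+1+i) := abs_pow x _
    have hb := abs_log_one_sub_le (t := x^(k+1+i)) (by rw [habs]; linarith)
    rw [Real.norm_eq_abs, ← pow_add]
    calc |Real.log (1 - x^(k+1+i))| ≤ 2*|x^(k+1+i)| := hb
    _ = 2 * |x|^(k+1+i) := by rw [habs]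

lemma euler_hasProd (k : ℕ) (hk : 1 ≤ k) :
    HasProd (fun i : ℕ => 1 - x^(k+1+i))
      (Real.exp (∑' i : ℕ, Real.log (1 - x^(k+1+i)))) := by
  have hlog := log_summable hx k
  have hpos : ∀ i : ℕ, 0 < 1 - x^(k+1+i) := fun i => one_sub_pow_pos hx (by omega)
  have hL := hlog.hasSum
  have key : ∀ s : Finset ℕ,
      ∏ i ∈ s, (1 - x^(k+1+i)) = Real.exp (∑ i ∈ s, Real.log (1 - x^(k+1+i))) := by
    intro s
    rw [Real.exp_sum]
    exact Finset.prod_congr rfl fun i _ => (Real.exp_log (hpos i)).symm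
  have h2 := (Real.continuous_exp.continuousAt (x := ∑' i : ℕ, Real.log (1 - x^(k+1+i)))).tendsto.comp hL
  exact h2.congr fun s => (key s).symm

lemma cq_bound_prod (n r k : ℕ) (hk : 1 ≤ k) :
    ‖(-1:ℝ)^r * cq x n r * x^(tri r) * (x^k)^r‖ ≤ (2/(1-|x|))^r * |x|^(tri r) := by
  have h1 : (0:ℝ) < 1 - |x| := by linarith [abs_nonneg x]
  rw [Real.norm_eq_abs, abs_mul, abs_mul, abs_mul, abs_pow, abs_pow, abs_pow, abs_neg, abs_one,
    one_pow, one_mul]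
  have hxk : |x^k| ≤ 1 := by
    rw [abs_pow]; exact pow_le_one₀ (abs_nonneg x) hx.le
  have h2 : |x^k|^r ≤ 1 := pow_le_one₀ (abs_nonneg _) hxk
  have h3 := cq_abs_le hx n r
  have h4 : (0:ℝ) ≤ |x|^(tri r) := by positivity
  calc |cq x n r| * |x|^(tri r) * |x^k|^r ≤ |cq x n r| * |x|^(tri r) * 1 := by
        apply mul_le_mul_of_nonneg_left h2 (by positivity)
  _ = |cq x n r| * |x|^(tri r) := by ring
  _ ≤ (2/(1-|x|))^r * |x|^(tri r) := mul_le_mul_of_nonneg_right h3 h4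

lemma euler_eq (k : ℕ) (hk : 1 ≤ k) :
    (∏' i : ℕ, (1 - x^(k+1+i)))
      = ∑' r : ℕ, ((-1)^r * (P x r)⁻¹ * x^(tri r) * (x^k)^r) := by
  have h1 : (0:ℝ) < 1 - |x| := by linarith [abs_nonneg x]
  have hp := euler_hasProd hx k hk
  have hpn := hp.tendsto_prod_nat
  have hfin : ∀ n : ℕ, ∏ i ∈ Finset.range n, (1 - x^(k+1+i))
      = ∑' r : ℕ, ((-1)^r * cq x n r * x^(tri r) * (x^k)^r) := by
    intro n
    have e1 : ∀ i ∈ Finset.range n, (1 - x^(k+1+i)) = (1 - x^k * x^(i+1)) := by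
      intro i _
      rw [← pow_add]
      congr 2
      omega
    have e2 : (∑' r : ℕ, ((-1)^r * cq x n r * x^(tri r) * (x^k)^r))
        = ∑ r ∈ Finset.range (n+1), (-1)^r * cq x n r * x^(tri r) * (x^k)^r := by
      apply tsum_eq_sum
      intro r hr
      rw [Finset.mem_range] at hr
      rw [cq_eq_zero n r (by omega)]
      ring
    rw [Finset.prod_congr rfl e1, FQB n (x^k), e2]
  have hdom : Tendsto (fun n : ℕ => ∑' r : ℕ, ((-1)^r * cq x n r * x^(tri r) * (x^k)^r)) atTop
      (𝓝 (∑' r : ℕ, ((-1)^r * (P x r)⁻¹ * x^(tri r) * (x^k)^r))) := by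
    apply tendsto_tsum_of_dominated_convergence
      (bound := fun r : ℕ => (2/(1-|x|))^r * |x|^(tri r))
    · exact summable_MB hx _ (by positivity)
    · intro r
      have h := (cq_tendsto hx r).const_mul ((-1:ℝ)^r * x^(tri r) * (x^k)^r)
      have he : ((-1:ℝ)^r * x^(tri r) * (x^k)^r) * (P x r)⁻¹
          = (-1)^r * (P x r)⁻¹ * x^(tri r) * (x^k)^r := by ring
      rw [he] at h
      exact h.congr fun n => by ring
    · exact Eventually.of_forall fun n r => cq_bound_prod hx n r k hk
  have hlim2 : Tendsto (fun n : ℕ => ∏ i ∈ Finset.range n, (1 - x^(k+1+i))) atTop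
      (𝓝 (∑' r : ℕ, ((-1)^r * (P x r)⁻¹ * x^(tri r) * (x^k)^r))) := by
    refine hdom.congr fun n => (hfin n).symm
  rw [hp.tprod_eq]
  exact tendsto_nhds_unique hpn hlim2

lemma Pinv_le (r : ℕ) : (P x r)⁻¹ ≤ (2/(1-|x|))^r := by
  have h1 : (0:ℝ) < 1 - |x| := by linarith [abs_nonneg x]
  have h2 : ((1-|x|)^r)⁻¹ ≥ (P x r)⁻¹ := inv_anti₀ (pow_pos h1 r) (P_ge hx r)
  calc (P x r)⁻¹ ≤ ((1-|x|)^r)⁻¹ := h2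
  _ = ((1-|x|)⁻¹)^r := by rw [inv_pow]
  _ ≤ (2/(1-|x|))^r := by
      apply pow_le_pow_left₀ (inv_nonneg.mpr h1.le)
      rw [inv_eq_one_div]
      gcongr
      norm_num

lemma u_bound (k r : ℕ) :
    ‖(-1:ℝ)^r * (P x r)⁻¹ * x^(tri r) * (x^k)^r‖ ≤ (2/(1-|x|))^r * |x|^(tri r) := by
  have h1 : (0:ℝ) < 1 - |x| := by linarith [abs_nonneg x]
  rw [Real.norm_eq_abs, abs_mul, abs_mul, abs_mul, abs_pow, abs_pow, abs_pow, abs_neg, abs_one,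
    one_pow, one_mul, abs_inv, abs_of_pos (P_pos hx r)]
  have hxk : |x^k| ≤ 1 := by
    rw [abs_pow]; exact pow_le_one₀ (abs_nonneg x) hx.le
  have h2 : |x^k|^r ≤ 1 := pow_le_one₀ (abs_nonneg _) hxk
  calc (P x r)⁻¹ * |x|^(tri r) * |x^k|^r ≤ (P x r)⁻¹ * |x|^(tri r) * 1 := by
        apply mul_le_mul_of_nonneg_left h2
        exact mul_nonneg (inv_nonneg.mpr (P_pos hx r).le) (by positivity)
  _ = (P x r)⁻¹ * |x|^(tri r) := by ring
  _ ≤ (2/(1-|x|))^r * |x|^(tri r) := mul_le_mul_of_nonneg_right (Pinv_le hx r) (by positivity)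

lemma lambert_summable : Summable (fun i : ℕ => x^(i+1)/(1-x^(i+1))) := by
  have h1 : (0:ℝ) < 1 - |x| := by linarith [abs_nonneg x]
  apply Summable.of_norm_bounded (g := fun i : ℕ => (|x| * |x|^i) / (1-|x|))
  · exact (((summable_geometric_of_lt_one (abs_nonneg x) hx).mul_left _)).div_const _
  · intro i
    rw [Real.norm_eq_abs, abs_div, abs_of_pos (one_sub_pow_pos hx (by omega : 1 ≤ i+1))]
    have hnum : |x^(i+1)| = |x| * |x|^i := by rw [abs_pow, pow_succ']
    rw [hnum]
    exact div_le_div₀ (by positivity) le_rfl h1 (one_sub_pow_ge hx (by omega))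

lemma geom_shift {y : ℝ} (hy : |y| < 1) :
    ∑' n : ℕ, ((n+1:ℕ):ℝ) * y^(n+1) = y/(1-y)^2 := by
  have hy' : ‖y‖ < 1 := by rwa [Real.norm_eq_abs]
  have hs : Summable (fun n : ℕ => (n:ℝ) * y^n) := by
    simpa using summable_pow_mul_geometric_of_norm_lt_one 1 hy'
  have h0 := Summable.tsum_eq_zero_add hs
  rw [tsum_coe_mul_geometric_of_norm_lt_one hy'] at h0
  simp only [Nat.cast_zero, zero_mul, pow_zero, zero_add] at h0
  rw [← h0]

lemma VHinf :
    (∑' r : ℕ, ((-1:ℝ)^r * (P x (r+1))⁻¹ * x^(tri (r+1)) / (1 - x^(r+1))))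
      = ∑' i : ℕ, x^(i+1)/(1-x^(i+1)) := by
  have h1 : (0:ℝ) < 1 - |x| := by linarith [abs_nonneg x]
  set M := 2/(1-|x|) with hMdef
  have hM : 0 ≤ M := by positivity
  have hbndsum : Summable (fun i : ℕ => (M^(i+1) * |x|^(tri (i+1))) / (1-|x|)) :=
    ((summable_nat_add_iff 1).mpr (summable_MB hx M hM)).div_const _
  have htend : Tendsto
      (fun n : ℕ => ∑' i : ℕ, ((-1:ℝ)^i * cq x n (i+1) * x^(tri (i+1)) / (1 - x^(i+1)))) atTop
      (𝓝 (∑' r : ℕ, ((-1:ℝ)^r * (P x (r+1))⁻¹ * x^(tri (r+1)) / (1 - x^(r+1))))) := by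
    apply tendsto_tsum_of_dominated_convergence hbndsum
    · intro i
      have h := (cq_tendsto hx (i+1)).const_mul ((-1:ℝ)^i * x^(tri (i+1)) / (1 - x^(i+1)))
      have he : ((-1:ℝ)^i * x^(tri (i+1)) / (1 - x^(i+1))) * (P x (i+1))⁻¹
          = (-1:ℝ)^i * (P x (i+1))⁻¹ * x^(tri (i+1)) / (1 - x^(i+1)) := by ring
      rw [he] at h
      exact h.congr fun n => by ring
    · apply Eventually.of_forall
      intro n i
      rw [Real.norm_eq_abs, abs_div, abs_mul, abs_mul, abs_pow, abs_pow, abs_neg, abs_one,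
        one_pow, one_mul, abs_of_pos (one_sub_pow_pos hx (by omega : 1 ≤ i+1))]
      apply div_le_div₀ (by positivity) ?_ h1 (one_sub_pow_ge hx (by omega))
      exact mul_le_mul_of_nonneg_right (cq_abs_le hx n (i+1)) (by positivity)
  have hfin : ∀ n : ℕ,
      (∑' i : ℕ, ((-1:ℝ)^i * cq x n (i+1) * x^(tri (i+1)) / (1 - x^(i+1))))
        = ∑ i ∈ Finset.range n, x^(i+1)/(1-x^(i+1)) := by
    intro n
    rw [← VH hx n]
    apply tsum_eq_sum
    intro i hi
    rw [Finset.mem_range] at hi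
    rw [cq_eq_zero n (i+1) (by omega)]
    ring
  have htend2 : Tendsto (fun n : ℕ => ∑ i ∈ Finset.range n, x^(i+1)/(1-x^(i+1))) atTop
      (𝓝 (∑' i : ℕ, x^(i+1)/(1-x^(i+1)))) := (lambert_summable hx).hasSum.tendsto_sum_nat
  exact tendsto_nhds_unique (htend.congr hfin) htend2

end PFsec


end Uch
end

set_option maxHeartbeats 1000000 in
open Filter Finset Topology in
/-- The identity `Σ_{k≥1} k x^k ∏_{j>k}(1-x^j) = Σ_{k≥1} x^k/(1-x^k)` (for `|x|<1`). -/
theorem stmt_4 (x : ℝ) (hx : |x| < 1) :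
    ∑' k : {k : ℕ // 1 ≤ k},
        ((k : ℕ) : ℝ) * x ^ (k : ℕ) * ∏' j : {j : ℕ // (k : ℕ) < j}, (1 - x ^ (j : ℕ)) =
      ∑' k : {k : ℕ // 1 ≤ k}, x ^ (k : ℕ) / (1 - x ^ (k : ℕ)) := by
  classical
  have h1 : (0:ℝ) < 1 - |x| := by linarith [abs_nonneg x]
  have hxx : ‖|x|‖ < 1 := by rwa [Real.norm_eq_abs, abs_abs]
  have hQ : ∀ n : ℕ, (∏' j : {j : ℕ // (n+1 : ℕ) < j}, (1 - x ^ (j : ℕ)))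
      = ∑' r : ℕ, ((-1:ℝ)^r * (Uch.P x r)⁻¹ * x^(Uch.tri r) * (x^(n+1))^r) := by
    intro n
    rw [← Equiv.tprod_eq (Uch.eAbove (n+1)) (fun j : {j : ℕ // (n+1:ℕ) < j} => 1 - x ^ (j:ℕ))]
    exact Uch.euler_eq hx (n+1) (by omega)
  have eL : (∑' k : {k : ℕ // 1 ≤ k},
        ((k : ℕ) : ℝ) * x ^ (k : ℕ) * ∏' j : {j : ℕ // (k : ℕ) < j}, (1 - x ^ (j : ℕ)))
      = ∑' n : ℕ, (((n+1 : ℕ)) : ℝ) * x ^ (n+1)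
          * ∏' j : {j : ℕ // (n+1:ℕ) < j}, (1 - x ^ (j : ℕ)) :=
    (Equiv.tsum_eq Uch.eOne _).symm
  have eR : (∑' k : {k : ℕ // 1 ≤ k}, x ^ (k : ℕ) / (1 - x ^ (k : ℕ)))
      = ∑' n : ℕ, x ^ (n+1) / (1 - x ^ (n+1)) := (Equiv.tsum_eq Uch.eOne _).symm
  rw [eL, eR]
  set u : ℕ → ℕ → ℝ :=
    fun n r => (-1:ℝ)^r * (Uch.P x r)⁻¹ * x^(Uch.tri r) * (x^(n+1))^r with hu
  set G : ℕ × ℕ → ℝ := fun p => (((p.1+1 : ℕ)) : ℝ) * x ^ (p.1+1) * u p.1 p.2 with hG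
  have hsa : Summable (fun n : ℕ => (n:ℝ) * |x|^n) := by
    simpa using summable_pow_mul_geometric_of_norm_lt_one 1 hxx
  have ha : Summable (fun n : ℕ => ((n+1:ℕ):ℝ) * |x|^(n+1)) := (summable_nat_add_iff 1).mpr hsa
  have hb : Summable (fun r : ℕ => (2/(1-|x|))^r * |x|^(Uch.tri r)) :=
    Uch.summable_MB hx _ (div_nonneg (by norm_num) h1.le)
  have hGsum : Summable G := by
    apply Summable.of_norm_bounded
      (g := fun p : ℕ × ℕ => (((p.1+1:ℕ)):ℝ) * |x|^(p.1+1)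
        * ((2/(1-|x|))^p.2 * |x|^(Uch.tri p.2)))
    · exact ha.mul_of_nonneg hb (fun n => by positivity)
        (fun r => mul_nonneg (pow_nonneg (div_nonneg (by norm_num) h1.le) _) (by positivity))
    · rintro ⟨n, r⟩
      simp only [hG, hu]
      have hub := Uch.u_bound hx (n+1) r
      rw [Real.norm_eq_abs] at hub ⊢
      calc |(((n+1:ℕ)):ℝ) * x^(n+1) * ((-1:ℝ)^r * (Uch.P x r)⁻¹ * x^(Uch.tri r) * (x^(n+1))^r)|
          = (((n+1:ℕ)):ℝ) * |x|^(n+1)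
            * |(-1:ℝ)^r * (Uch.P x r)⁻¹ * x^(Uch.tri r) * (x^(n+1))^r| := by
            rw [abs_mul, abs_mul, abs_pow, Nat.abs_cast]
      _ ≤ (((n+1:ℕ)):ℝ) * |x|^(n+1) * ((2/(1-|x|))^r * |x|^(Uch.tri r)) :=
            mul_le_mul_of_nonneg_left hub (by positivity)
  have hfac : ∀ n : ℕ, Summable (fun r => G (n, r)) := fun n => hGsum.prod_factor n
  have hfac2 : ∀ r : ℕ, Summable (fun n => G (n, r)) := fun r => hGsum.prod_symm.prod_factor r
  calc ∑' n : ℕ, (((n+1:ℕ)):ℝ) * x^(n+1) * ∏' j : {j : ℕ // (n+1:ℕ) < j}, (1 - x^(j:ℕ))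
      = ∑' n : ℕ, ∑' r : ℕ, G (n, r) := by
        apply tsum_congr; intro n
        rw [hQ n]
        simp only [hG, hu]
        exact tsum_mul_left.symm
  _ = ∑' r : ℕ, ∑' n : ℕ, G (n, r) := by
        have hunc : Summable (Function.uncurry fun n r => G (n, r)) := by
          exact hGsum
        exact (Summable.tsum_comm' hunc hfac hfac2).symm
  _ = ∑' r : ℕ, ((-1:ℝ)^r * (Uch.P x r)⁻¹ * x^(Uch.tri r)) * (x^(r+1)/(1-x^(r+1))^2) := by
        apply tsum_congr; intro r
        have hy : |x^(r+1)| < 1 := lt_of_le_of_lt (Uch.abs_pow_le_abs hx (by omega)) hx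
        have hterm : ∀ n : ℕ, G (n, r)
            = ((-1:ℝ)^r * (Uch.P x r)⁻¹ * x^(Uch.tri r)) * (((n+1:ℕ):ℝ) * (x^(r+1))^(n+1)) := by
          intro n
          simp only [hG, hu]
          have hpp : x^(n+1) * (x^(n+1))^r = (x^(r+1))^(n+1) := by
            rw [← pow_succ', ← pow_mul, ← pow_mul, Nat.mul_comm]
          linear_combination (((n+1:ℕ):ℝ) * (-1:ℝ)^r * (Uch.P x r)⁻¹ * x^(Uch.tri r)) * hpp
        rw [tsum_congr hterm, tsum_mul_left, Uch.geom_shift hx hy]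
  _ = ∑' r : ℕ, ((-1:ℝ)^r * (Uch.P x (r+1))⁻¹ * x^(Uch.tri (r+1)) / (1 - x^(r+1))) := by
        apply tsum_congr; intro r
        have hne : (1:ℝ) - x^(r+1) ≠ 0 := Uch.one_sub_pow_ne hx (by omega)
        have hPne : Uch.P x r ≠ 0 := (Uch.P_pos hx r).ne'
        rw [Uch.tri_succ, pow_add, Uch.P_succ, mul_inv]
        have hne2 : (1:ℝ) - x^r * x ≠ 0 := by rw [← pow_succ]; exact hne
        field_simp
        ring
  _ = ∑' i : ℕ, x^(i+1)/(1-x^(i+1)) := Uch.VHinf hx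
end

section
/- The sum over all partitions λ of n of (largest part times its multiplicity) equals the coefficient of x^n in Σ_{k≥1} (k x^k/(1-x^k)) ∏_{j=1}^{k}(1-x^j)^{-1}. -/
open Finset Function

namespace Stmt6Aux

/-! ### The weight of a multiplicity vector -/

/-- weight of a multiplicity vector: `t i` parts of size `i+1`. -/
def W {N : ℕ} (t : Fin N → ℕ) : ℕ := ∑ i : Fin N, ((i : ℕ) + 1) * t i

lemma W_snoc {N : ℕ} (f : Fin N → ℕ) (y : ℕ) :
    W (Fin.snoc f y) = W f + (N + 1) * y := by
  unfold W
  rw [Fin.sum_univ_castSucc]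
  simp

def snocEquiv (N : ℕ) : (Fin (N + 1) → ℕ) ≃ (Fin N → ℕ) × ℕ where
  toFun t := (fun i => t i.castSucc, t (Fin.last N))
  invFun p := Fin.snoc p.1 p.2
  left_inv t := by
    funext i
    induction i using Fin.lastCases with
    | last => simp
    | cast i => simp
  right_inv p := by
    refine Prod.ext ?_ ?_ <;> simp

/-! ### The generating function of bounded partitions -/

lemma tsum_W (N : ℕ) {x : ℝ} (hx : |x| < 1) :
    Summable (fun t : Fin N → ℕ => ‖x ^ W t‖) ∧
      ∑' t : Fin N → ℕ, x ^ W t = ∏ j ∈ Icc 1 N, (1 - x ^ j)⁻¹ := by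
  induction N with
  | zero =>
    constructor
    · exact .of_finite
    · rw [tsum_eq_single (fun i => 0) (fun b hb => absurd (Subsingleton.elim b _) hb)]
      simp [W]
  | succ N ih =>
    have hxN : ‖x ^ (N + 1)‖ < 1 := by
      rw [norm_pow]
      exact pow_lt_one₀ (abs_nonneg x) hx (by omega)
    have hgeo : Summable (fun n : ℕ => ‖(x ^ (N + 1)) ^ n‖) := by
      simp only [norm_pow (x ^ (N + 1))]
      exact summable_geometric_of_lt_one (norm_nonneg _) hxN
    have hkey : ∀ p : (Fin N → ℕ) × ℕ,
        x ^ W ((snocEquiv N).symm p) = x ^ W p.1 * (x ^ (N + 1)) ^ p.2 := by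
      intro p
      show x ^ W (Fin.snoc p.1 p.2) = _
      rw [W_snoc, pow_add, ← pow_mul]
    constructor
    · rw [← (Equiv.summable_iff (snocEquiv N).symm)]
      apply Summable.congr (ih.1.mul_norm hgeo)
      intro p
      rw [comp_apply, hkey p, norm_mul]
    · rw [← (Equiv.tsum_eq (snocEquiv N).symm)]
      calc ∑' p : (Fin N → ℕ) × ℕ, x ^ W ((snocEquiv N).symm p)
          = ∑' p : (Fin N → ℕ) × ℕ, x ^ W p.1 * (x ^ (N + 1)) ^ p.2 :=
            tsum_congr hkey
        _ = (∑' t : Fin N → ℕ, x ^ W t) * ∑' n : ℕ, (x ^ (N + 1)) ^ n :=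
            (tsum_mul_tsum_of_summable_norm ih.1 hgeo).symm
        _ = (∏ j ∈ Icc 1 N, (1 - x ^ j)⁻¹) * (1 - x ^ (N + 1))⁻¹ := by
            rw [ih.2, tsum_geometric_of_norm_lt_one hxN]
        _ = ∏ j ∈ Icc 1 (N + 1), (1 - x ^ j)⁻¹ := by
            rw [Finset.prod_Icc_succ_top (by omega)]

/-! ### The fiber sum for a fixed largest part `k` -/

lemma fiber_eq {x : ℝ} (hx : |x| < 1) (k : ℕ) (hk : 1 ≤ k) :
    Summable (fun p : ℕ × (Fin (k - 1) → ℕ) =>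
        ‖(k : ℝ) * p.1 * x ^ (k * p.1 + W p.2)‖) ∧
    ∑' p : ℕ × (Fin (k - 1) → ℕ), (k : ℝ) * p.1 * x ^ (k * p.1 + W p.2)
      = (k : ℝ) * x ^ k / (1 - x ^ k) * ∏ j ∈ Icc 1 k, (1 - x ^ j)⁻¹ := by
  have hxk : ‖x ^ k‖ < 1 := by
    rw [norm_pow]
    exact pow_lt_one₀ (abs_nonneg x) hx (by omega)
  have hxk0 : (1 : ℝ) - x ^ k ≠ 0 := by
    have : x ^ k < 1 := lt_of_le_of_lt (le_abs_self _)
      (by rw [← Real.norm_eq_abs]; exact hxk)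
    intro h
    nlinarith
  have hm_sum : Summable (fun m : ℕ => ‖(k : ℝ) * m * x ^ (k * m)‖) := by
    have : Summable (fun m : ℕ => (m : ℝ) ^ 1 * ‖x ^ k‖ ^ m) :=
      summable_pow_mul_geometric_of_norm_lt_one 1 (by rwa [norm_norm])
    apply Summable.of_nonneg_of_le (fun m => norm_nonneg _) ?_ (this.mul_left (k : ℝ))
    intro m
    rw [norm_mul, norm_mul]
    have : ‖x ^ (k * m)‖ = ‖x ^ k‖ ^ m := by rw [pow_mul, norm_pow]
    rw [this, pow_one]
    simp [Real.norm_eq_abs, abs_of_nonneg, mul_assoc, Nat.abs_cast]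
  have hkey : ∀ p : ℕ × (Fin (k - 1) → ℕ),
      (k : ℝ) * p.1 * x ^ (k * p.1 + W p.2)
        = ((k : ℝ) * p.1 * x ^ (k * p.1)) * x ^ W p.2 := by
    intro p; rw [pow_add]; ring
  constructor
  · apply Summable.congr (hm_sum.mul_norm (tsum_W (k - 1) hx).1)
    intro p
    exact congrArg norm (hkey p).symm
  · calc ∑' p : ℕ × (Fin (k - 1) → ℕ), (k : ℝ) * p.1 * x ^ (k * p.1 + W p.2)
        = ∑' p : ℕ × (Fin (k - 1) → ℕ), ((k : ℝ) * p.1 * x ^ (k * p.1)) * x ^ W p.2 :=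
          tsum_congr hkey
      _ = (∑' m : ℕ, (k : ℝ) * m * x ^ (k * m)) * ∑' t : Fin (k - 1) → ℕ, x ^ W t :=
          (tsum_mul_tsum_of_summable_norm hm_sum (tsum_W (k - 1) hx).1).symm
      _ = (k : ℝ) * x ^ k / (1 - x ^ k) * ∏ j ∈ Icc 1 k, (1 - x ^ j)⁻¹ := by
          have h1 : (∑' m : ℕ, (k : ℝ) * m * x ^ (k * m))
              = (k : ℝ) * (x ^ k / (1 - x ^ k) ^ 2) := by
            rw [← tsum_coe_mul_geometric_of_norm_lt_one hxk, ← tsum_mul_left]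
            congr 1 with m
            rw [pow_mul]; ring
          rw [h1, (tsum_W (k - 1) hx).2]
          have h2 : Icc 1 k = Icc 1 ((k - 1) + 1) := by congr 1; omega
          rw [h2, Finset.prod_Icc_succ_top (by omega)]
          have h3 : k - 1 + 1 = k := by omega
          rw [h3]
          field_simp

/-! ### Partitions with given largest part and multiplicities -/

/-- the multiset of parts: `m` copies of `k` plus `t i` copies of `i+1`. -/
def pts (k m : ℕ) (t : Fin (k - 1) → ℕ) : Multiset ℕ :=
  Multiset.replicate m k + ∑ i : Fin (k - 1), Multiset.replicate (t i) ((i : ℕ) + 1)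

lemma mem_pts {k m : ℕ} (hk : 1 ≤ k) {t : Fin (k - 1) → ℕ} {j : ℕ} (hj : j ∈ pts k m t) :
    1 ≤ j ∧ j ≤ k := by
  rw [pts, Multiset.mem_add] at hj
  rcases hj with hj | hj
  · rcases Multiset.mem_replicate.1 hj with ⟨h1, rfl⟩
    omega
  · rw [Multiset.mem_sum] at hj
    obtain ⟨i, _, hi⟩ := hj
    rcases Multiset.mem_replicate.1 hi with ⟨h1, rfl⟩
    have := i.2
    omega

lemma sum_pts (k m : ℕ) (t : Fin (k - 1) → ℕ) : (pts k m t).sum = k * m + W t := by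
  rw [pts, Multiset.sum_add, Multiset.sum_replicate, smul_eq_mul]
  have h : (∑ i : Fin (k - 1), Multiset.replicate (t i) ((i : ℕ) + 1)).sum
      = ∑ i : Fin (k - 1), (Multiset.replicate (t i) ((i : ℕ) + 1)).sum := by
    rw [← Multiset.coe_sumAddMonoidHom, map_sum]
  rw [h]
  simp only [Multiset.sum_replicate, smul_eq_mul]
  rw [W]
  congr 1
  · ring
  · exact Finset.sum_congr rfl fun i _ => by ring

lemma count_pts_self {k m : ℕ} (hk : 1 ≤ k) (t : Fin (k - 1) → ℕ) :
    (pts k m t).count k = m := by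
  rw [pts, Multiset.count_add, Multiset.count_replicate_self, Multiset.count_sum']
  have : ∀ i ∈ (univ : Finset (Fin (k - 1))),
      (Multiset.replicate (t i) ((i : ℕ) + 1)).count k = 0 := by
    intro i _
    rw [Multiset.count_replicate, if_neg (by have := i.2; omega)]
  rw [Finset.sum_congr rfl this]
  simp

lemma count_pts_lt {k m : ℕ} (hk : 1 ≤ k) (t : Fin (k - 1) → ℕ) {j : ℕ}
    (h1 : 1 ≤ j) (h2 : j ≤ k - 1) :
    (pts k m t).count j = t ⟨j - 1, by omega⟩ := by
  rw [pts, Multiset.count_add, Multiset.count_replicate, if_neg (by omega),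
    Multiset.count_sum', zero_add]
  rw [Finset.sum_eq_single (⟨j - 1, by omega⟩ : Fin (k - 1))]
  · rw [Multiset.count_replicate, if_pos (by simp; omega)]
  · intro i _ hne
    rw [Multiset.count_replicate, if_neg]
    intro h
    apply hne
    apply Fin.ext
    simp only []
    omega
  · intro h
    exact absurd (Finset.mem_univ _) h

lemma sup_pts {k m : ℕ} (hk : 1 ≤ k) (hm : 1 ≤ m) (t : Fin (k - 1) → ℕ) :
    (pts k m t).sup = k := by
  apply le_antisymm
  · exact Multiset.sup_le.2 fun b hb => (mem_pts hk hb).2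
  · apply Multiset.le_sup
    rw [pts, Multiset.mem_add]
    exact Or.inl (Multiset.mem_replicate.2 ⟨by omega, rfl⟩)

lemma sup_mem {s : Multiset ℕ} (hs : s ≠ 0) : s.sup ∈ s := by
  induction s using Multiset.induction with
  | empty => exact absurd rfl hs
  | cons a s ih =>
    rw [Multiset.sup_cons]
    rcases eq_or_ne s 0 with rfl | h
    · simp
    · rcases le_total s.sup a with hle | hle
      · rw [sup_eq_left.2 hle]; exact Multiset.mem_cons_self _ _
      · rw [sup_eq_right.2 hle]; exact Multiset.mem_cons_of_mem (ih h)

/-- The index type: largest part `k`, its multiplicity `m`, multiplicities of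
the smaller parts. -/
abbrev J : Type := Σ k : {k : ℕ // 1 ≤ k}, {m : ℕ // 1 ≤ m} × (Fin ((k : ℕ) - 1) → ℕ)

def toPart (j : J) : Σ n : ℕ, Nat.Partition n :=
  ⟨(j.1 : ℕ) * (j.2.1 : ℕ) + W j.2.2,
    { parts := pts j.1 j.2.1 j.2.2
      parts_pos := fun hi => (mem_pts j.1.2 hi).1
      parts_sum := sum_pts _ _ _ }⟩

lemma toPart_injective : Function.Injective toPart := by
  rintro ⟨⟨k, hk⟩, ⟨m, hm⟩, t⟩ ⟨⟨k', hk'⟩, ⟨m', hm'⟩, t'⟩ h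
  have hp : pts k m t = pts k' m' t' := congrArg (fun p => p.2.parts) h
  have hkk : k = k' := by
    rw [← sup_pts hk hm t, hp, sup_pts hk' hm' t']
  subst hkk
  have hmm : m = m' := by
    rw [← count_pts_self (m := m) hk t, hp, count_pts_self (m := m') hk t']
  subst hmm
  have htt : t = t' := by
    funext i
    have hi2 : (i : ℕ) < k - 1 := i.2
    have h1 : 1 ≤ (i : ℕ) + 1 := by omega
    have h2 : (i : ℕ) + 1 ≤ k - 1 := by omega
    have e1 := count_pts_lt (m := m) hk t h1 h2
    have e2 := count_pts_lt (m := m) hk t' h1 h2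
    have hi : (⟨(i : ℕ) + 1 - 1, by omega⟩ : Fin (k - 1)) = i := by
      apply Fin.ext; simp
    rw [hi] at e1 e2
    rw [← e1, hp, e2]
  subst htt
  rfl

lemma sigma_partition_eq {n n' : ℕ} (q : Nat.Partition n) (q' : Nat.Partition n')
    (h : q.parts = q'.parts) :
    (⟨n, q⟩ : Σ n : ℕ, Nat.Partition n) = ⟨n', q'⟩ := by
  have hnn : n = n' := by rw [← q.parts_sum, ← q'.parts_sum, h]
  subst hnn
  simp only [Sigma.mk.inj_iff, heq_eq_eq, true_and]
  ext1
  exact h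

lemma toPart_surj {x : ℝ} (p : Σ n : ℕ, Nat.Partition n)
    (hF : ((p.2.parts.sup * p.2.parts.count p.2.parts.sup : ℕ) : ℝ) * x ^ p.1 ≠ 0) :
    p ∈ Set.range toPart := by
  obtain ⟨n, π⟩ := p
  have hne : π.parts ≠ 0 := by
    intro h
    apply hF
    simp [h]
  set k := π.parts.sup with hk_def
  have hkmem : k ∈ π.parts := sup_mem hne
  have hk : 1 ≤ k := π.parts_pos hkmem
  set m := π.parts.count k with hm_def
  have hm : 1 ≤ m := Multiset.count_pos.2 hkmem
  set t : Fin (k - 1) → ℕ := fun i => π.parts.count ((i : ℕ) + 1) with ht_def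
  have hparts : pts k m t = π.parts := by
    ext j
    rcases Nat.lt_or_ge j 1 with hj | hj
    · interval_cases j
      rw [Multiset.count_eq_zero.2 (fun h => by have := (mem_pts hk h).1; omega),
        Multiset.count_eq_zero.2 (fun h => by have := π.parts_pos h; omega)]
    rcases Nat.lt_or_ge (k : ℕ) j with hj2 | hj2
    · rw [Multiset.count_eq_zero.2 (fun h => by have := (mem_pts hk h).2; omega),
        Multiset.count_eq_zero.2 (fun h => by have := Multiset.le_sup h; omega)]
    rcases eq_or_lt_of_le hj2 with rfl | hj3
    · rw [count_pts_self hk t]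
    · rw [count_pts_lt hk t hj (by omega)]
      simp only [ht_def]
      congr 1
      omega
  exact ⟨⟨⟨k, hk⟩, ⟨m, hm⟩, t⟩, sigma_partition_eq _ _ hparts⟩

/-! ### Uniform bound on the partial products -/

lemma prod_bound {a : ℝ} (h0 : 0 ≤ a) (h1 : a < 1) (k : ℕ) :
    ∏ j ∈ Icc 1 k, (1 - a ^ j)⁻¹ ≤ Real.exp ((1 - a)⁻¹ * (1 - a)⁻¹) := by
  have ha' : (0 : ℝ) < 1 - a := by linarith
  have haj : ∀ j ∈ Icc 1 k, a ^ j ≤ a := by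
    intro j hj
    have h1j : 1 ≤ j := (mem_Icc.1 hj).1
    calc a ^ j ≤ a ^ 1 := pow_le_pow_of_le_one h0 h1.le h1j
      _ = a := pow_one a
  have hfac : ∀ j ∈ Icc 1 k, (1 - a ^ j)⁻¹ ≤ Real.exp (a ^ j * (1 - a)⁻¹) := by
    intro j hj
    have h2 : (0 : ℝ) < 1 - a ^ j := by have := haj j hj; linarith
    have key : (1 - a ^ j)⁻¹ = 1 + a ^ j * (1 - a ^ j)⁻¹ := by
      field_simp
      ring
    rw [key]
    have step : a ^ j * (1 - a ^ j)⁻¹ ≤ a ^ j * (1 - a)⁻¹ := by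
      apply mul_le_mul_of_nonneg_left _ (pow_nonneg h0 j)
      apply inv_anti₀ ha'
      have := haj j hj; linarith
    have := Real.add_one_le_exp (a ^ j * (1 - a)⁻¹)
    linarith
  calc ∏ j ∈ Icc 1 k, (1 - a ^ j)⁻¹
      ≤ ∏ j ∈ Icc 1 k, Real.exp (a ^ j * (1 - a)⁻¹) := by
        apply Finset.prod_le_prod
        · intro j hj
          have := haj j hj
          have h2 : (0 : ℝ) < 1 - a ^ j := by linarith
          positivity
        · exact hfac
    _ = Real.exp (∑ j ∈ Icc 1 k, a ^ j * (1 - a)⁻¹) := (Real.exp_sum _ _).symm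
    _ ≤ Real.exp ((1 - a)⁻¹ * (1 - a)⁻¹) := by
        apply Real.exp_le_exp.2
        rw [← Finset.sum_mul]
        apply mul_le_mul_of_nonneg_right _ (by positivity)
        calc ∑ j ∈ Icc 1 k, a ^ j ≤ ∑' j : ℕ, a ^ j :=
              Summable.sum_le_tsum _ (fun j _ => pow_nonneg h0 j)
                (summable_geometric_of_lt_one h0 h1)
          _ = (1 - a)⁻¹ := tsum_geometric_of_lt_one h0 h1

/-! ### The two summand functions -/

def Fp (x : ℝ) : (Σ n : ℕ, Nat.Partition n) → ℝ := fun p =>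
  ((p.2.parts.sup * p.2.parts.count p.2.parts.sup : ℕ) : ℝ) * x ^ p.1

def gp (x : ℝ) : J → ℝ := fun j =>
  ((j.1 : ℕ) : ℝ) * ((j.2.1 : ℕ) : ℝ) * x ^ ((j.1 : ℕ) * (j.2.1 : ℕ) + W j.2.2)

lemma Fp_toPart (x : ℝ) (j : J) : Fp x (toPart j) = gp x j := by
  obtain ⟨⟨k, hk⟩, ⟨m, hm⟩, t⟩ := j
  show ((pts k m t).sup * (pts k m t).count (pts k m t).sup : ℕ) * x ^ (k * m + W t)
    = (k : ℝ) * (m : ℝ) * x ^ (k * m + W t)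
  rw [sup_pts hk hm t, count_pts_self hk t]
  push_cast
  ring

lemma Fp_supp (x : ℝ) : ∀ p ∉ Set.range toPart, Fp x p = 0 := by
  intro p hp
  by_contra h
  exact hp (toPart_surj p h)

lemma gp_norm (x : ℝ) (j : J) : ‖gp x j‖ = gp |x| j := by
  unfold gp
  simp only [norm_mul, norm_pow, Real.norm_eq_abs, Nat.abs_cast]

/-- injectivity of the fiber inclusion -/
lemma hι (k : {k : ℕ // 1 ≤ k}) : Function.Injective
    (fun q : {m : ℕ // 1 ≤ m} × (Fin ((k : ℕ) - 1) → ℕ) =>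
      (((q.1 : ℕ), q.2) : ℕ × (Fin ((k : ℕ) - 1) → ℕ))) := by
  intro q q' h
  rw [Prod.mk.injEq] at h
  exact Prod.ext (Subtype.ext h.1) h.2

lemma fiber_subtype {x : ℝ} (hx : |x| < 1) (k : {k : ℕ // 1 ≤ k}) :
    Summable (fun q : {m : ℕ // 1 ≤ m} × (Fin ((k : ℕ) - 1) → ℕ) => gp x ⟨k, q⟩) ∧
    ∑' q : {m : ℕ // 1 ≤ m} × (Fin ((k : ℕ) - 1) → ℕ), gp x ⟨k, q⟩
      = ((k : ℕ) : ℝ) * x ^ (k : ℕ) / (1 - x ^ (k : ℕ)) *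
          ∏ j ∈ Icc 1 (k : ℕ), (1 - x ^ j)⁻¹ := by
  set f : ℕ × (Fin ((k : ℕ) - 1) → ℕ) → ℝ := fun p =>
    ((k : ℕ) : ℝ) * p.1 * x ^ ((k : ℕ) * p.1 + W p.2) with hf_def
  have hsupp : Function.support f ⊆ Set.range
      (fun q : {m : ℕ // 1 ≤ m} × (Fin ((k : ℕ) - 1) → ℕ) =>
        (((q.1 : ℕ), q.2) : ℕ × (Fin ((k : ℕ) - 1) → ℕ))) := by
    intro p hp
    rcases Nat.eq_zero_or_pos p.1 with h0 | h0
    · exfalso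
      apply hp
      show f p = 0
      rw [hf_def]
      simp [h0]
    · exact ⟨(⟨p.1, h0⟩, p.2), rfl⟩
  have hcomp : ∀ q : {m : ℕ // 1 ≤ m} × (Fin ((k : ℕ) - 1) → ℕ),
      f ((q.1 : ℕ), q.2) = gp x ⟨k, q⟩ := fun q => rfl
  constructor
  · apply Summable.congr (((fiber_eq hx (k : ℕ) k.2).1.of_norm).comp_injective (hι k))
    intro q
    exact hcomp q
  · calc ∑' q : {m : ℕ // 1 ≤ m} × (Fin ((k : ℕ) - 1) → ℕ), gp x ⟨k, q⟩
        = ∑' q : {m : ℕ // 1 ≤ m} × (Fin ((k : ℕ) - 1) → ℕ), f ((q.1 : ℕ), q.2) :=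
          tsum_congr fun q => (hcomp q).symm
      _ = ∑' p : ℕ × (Fin ((k : ℕ) - 1) → ℕ), f p :=
          Function.Injective.tsum_eq (hι k) hsupp
      _ = ((k : ℕ) : ℝ) * x ^ (k : ℕ) / (1 - x ^ (k : ℕ)) *
            ∏ j ∈ Icc 1 (k : ℕ), (1 - x ^ j)⁻¹ := (fiber_eq hx (k : ℕ) k.2).2

lemma gp_norm_summable {x : ℝ} (hx : |x| < 1) : Summable (fun j : J => ‖gp x j‖) := by
  set a : ℝ := |x| with ha_def
  have ha0 : (0 : ℝ) ≤ a := abs_nonneg x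
  have ha1 : a < 1 := hx
  have ha : |a| < 1 := by rw [ha_def, abs_abs]; exact hx
  have ha' : (0 : ℝ) < 1 - a := by linarith
  have hnn : ∀ j : J, 0 ≤ gp a j := by
    intro j
    unfold gp
    positivity
  have heq : (fun j : J => ‖gp x j‖) = fun j : J => gp a j := by
    funext j
    exact gp_norm x j
  rw [heq]
  apply (summable_sigma_of_nonneg fun j => hnn _).2
  refine ⟨fun k => (fiber_subtype ha k).1, ?_⟩
  set C : ℝ := (1 - a)⁻¹ * Real.exp ((1 - a)⁻¹ * (1 - a)⁻¹) with hC_def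
  have hmaj : Summable (fun k : {k : ℕ // 1 ≤ k} => C * (((k : ℕ) : ℝ) ^ 1 * a ^ (k : ℕ))) := by
    have h1 : Summable (fun k : ℕ => ((k : ℕ) : ℝ) ^ 1 * a ^ k) :=
      summable_pow_mul_geometric_of_norm_lt_one 1 (by rwa [Real.norm_eq_abs, abs_abs])
    exact (h1.mul_left C).comp_injective Subtype.val_injective
  apply Summable.of_nonneg_of_le (fun k => tsum_nonneg fun q => hnn _) ?_ hmaj
  intro k
  rw [(fiber_subtype ha k).2]
  have hak : a ^ (k : ℕ) ≤ a := by
    calc a ^ (k : ℕ) ≤ a ^ 1 := pow_le_pow_of_le_one ha0 ha1.le k.2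
      _ = a := pow_one a
  have h2 : (0 : ℝ) < 1 - a ^ (k : ℕ) := by linarith
  rw [div_eq_mul_inv]
  calc ((k : ℕ) : ℝ) * a ^ (k : ℕ) * (1 - a ^ (k : ℕ))⁻¹ * ∏ j ∈ Icc 1 (k : ℕ), (1 - a ^ j)⁻¹
      ≤ ((k : ℕ) : ℝ) * a ^ (k : ℕ) * (1 - a)⁻¹ * Real.exp ((1 - a)⁻¹ * (1 - a)⁻¹) := by
        have hb1 : (1 - a ^ (k : ℕ))⁻¹ ≤ (1 - a)⁻¹ := by
          apply inv_anti₀ ha'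
          linarith
        have hb2 := prod_bound ha0 ha1 (k : ℕ)
        have hp1 : (0 : ℝ) ≤ ((k : ℕ) : ℝ) * a ^ (k : ℕ) := by positivity
        have hp2 : (0 : ℝ) ≤ ∏ j ∈ Icc 1 (k : ℕ), (1 - a ^ j)⁻¹ := by
          apply Finset.prod_nonneg
          intro j hj
          have hajj : a ^ j ≤ a := by
            calc a ^ j ≤ a ^ 1 := pow_le_pow_of_le_one ha0 ha1.le (mem_Icc.1 hj).1
              _ = a := pow_one a
          have : (0 : ℝ) < 1 - a ^ j := by linarith
          positivity
        calc ((k : ℕ) : ℝ) * a ^ (k : ℕ) * (1 - a ^ (k : ℕ))⁻¹ *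
              ∏ j ∈ Icc 1 (k : ℕ), (1 - a ^ j)⁻¹
            ≤ ((k : ℕ) : ℝ) * a ^ (k : ℕ) * (1 - a)⁻¹ *
              ∏ j ∈ Icc 1 (k : ℕ), (1 - a ^ j)⁻¹ := by
              apply mul_le_mul_of_nonneg_right _ hp2
              apply mul_le_mul_of_nonneg_left hb1 hp1
          _ ≤ ((k : ℕ) : ℝ) * a ^ (k : ℕ) * (1 - a)⁻¹ *
              Real.exp ((1 - a)⁻¹ * (1 - a)⁻¹) := by
              apply mul_le_mul_of_nonneg_left hb2
              positivity
    _ = C * (((k : ℕ) : ℝ) ^ 1 * a ^ (k : ℕ)) := by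
        rw [hC_def]; ring

end Stmt6Aux

open Stmt6Aux Finset Function

/-- `Σ_{λ ⊢ n} L_n(λ) M_n(λ) = [x^n] Σ_{k≥1} (k x^k/(1-x^k)) ∏_{j=1}^{k}(1-x^j)⁻¹`:
the sum over all partitions of `n` of (largest part × its multiplicity) equals the
coefficient of `x^n` in `Σ_{k≥1} (k x^k/(1-x^k)) ∏_{j=1}^{k}(1-x^j)⁻¹`, expressed
as the generating-function identity for `|x| < 1`. -/
theorem stmt_6 (x : ℝ) (hx : |x| < 1) :
    ∑' n : ℕ,
        (∑ lam : Nat.Partition n,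
          ((lam.parts.sup * lam.parts.count lam.parts.sup : ℕ) : ℝ)) * x ^ n =
      ∑' k : {k : ℕ // 1 ≤ k},
        ((k : ℕ) : ℝ) * x ^ (k : ℕ) / (1 - x ^ (k : ℕ)) *
          ∏ j ∈ Finset.Icc 1 (k : ℕ), (1 - x ^ j)⁻¹ := by
  have hg : Summable (gp x) := (gp_norm_summable hx).of_norm
  have hFcomp : (Fp x) ∘ toPart = gp x := funext fun j => Fp_toPart x j
  have hF : Summable (Fp x) := by
    rw [← toPart_injective.summable_iff (Fp_supp x)]
    rw [hFcomp]
    exact hg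
  have hsupp : Function.support (Fp x) ⊆ Set.range toPart := by
    intro p hp
    by_contra h
    exact hp (Fp_supp x p h)
  calc ∑' n : ℕ, (∑ lam : Nat.Partition n,
          ((lam.parts.sup * lam.parts.count lam.parts.sup : ℕ) : ℝ)) * x ^ n
      = ∑' n : ℕ, ∑' lam : Nat.Partition n, Fp x ⟨n, lam⟩ := by
        apply tsum_congr
        intro n
        rw [tsum_fintype, Finset.sum_mul]
        rfl
    _ = ∑' p : Σ n : ℕ, Nat.Partition n, Fp x p := (Summable.tsum_sigma hF).symm
    _ = ∑' j : J, Fp x (toPart j) := (Function.Injective.tsum_eq toPart_injective hsupp).symm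
    _ = ∑' j : J, gp x j := tsum_congr fun j => Fp_toPart x j
    _ = ∑' k : {k : ℕ // 1 ≤ k},
          ∑' q : {m : ℕ // 1 ≤ m} × (Fin ((k : ℕ) - 1) → ℕ), gp x ⟨k, q⟩ :=
        Summable.tsum_sigma hg
    _ = ∑' k : {k : ℕ // 1 ≤ k},
          ((k : ℕ) : ℝ) * x ^ (k : ℕ) / (1 - x ^ (k : ℕ)) *
            ∏ j ∈ Finset.Icc 1 (k : ℕ), (1 - x ^ j)⁻¹ :=
        tsum_congr fun k => (fiber_subtype hx k).2
end

section
/- As y → ∞, ∫_y^∞ w/(e^w - 1) dw = -y log(1 - e^{-y}) + e^{-y} + O(e^{-2y}). -/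
open Filter MeasureTheory Set

lemma aux_log_bound {x : ℝ} (h0 : 0 ≤ x) (h1 : x ≤ 1/2) :
    |Real.log (1 - x) + x| ≤ 2 * x ^ 2 := by
  have hx1 : (0:ℝ) < 1 - x := by linarith
  have hub : Real.log (1 - x) ≤ -x := by
    have := Real.log_le_sub_one_of_pos hx1; linarith
  have hlb : -(x + 2 * x ^ 2) ≤ Real.log (1 - x) := by
    have h2 : Real.log (1 - x)⁻¹ ≤ (1 - x)⁻¹ - 1 :=
      Real.log_le_sub_one_of_pos (by positivity)
    rw [Real.log_inv] at h2
    have h3 : (1 - x)⁻¹ - 1 ≤ x + 2 * x ^ 2 := by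
      rw [sub_le_iff_le_add, inv_le_iff_one_le_mul₀ hx1]
      nlinarith
    linarith
  rw [abs_le]
  constructor <;> nlinarith

lemma aux_exp_half {w : ℝ} (hw : 1 ≤ w) : Real.exp (-w) ≤ 1/2 := by
  have h1 : Real.exp (-w) ≤ Real.exp (-1) := Real.exp_le_exp.2 (by linarith)
  have h2 : (2:ℝ) ≤ Real.exp 1 := by
    have := Real.add_one_le_exp (1:ℝ); linarith
  have h3 : Real.exp (-1) = (Real.exp 1)⁻¹ := Real.exp_neg 1
  have h4 : (Real.exp 1)⁻¹ ≤ 1/2 := by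
    rw [inv_le_comm₀ (Real.exp_pos 1) (by norm_num)]
    linarith
  linarith [h3 ▸ h1]

lemma aux_pt_bound {w : ℝ} (hw : 1 ≤ w) :
    |Real.log (1 - Real.exp (-w)) + Real.exp (-w)| ≤ 2 * Real.exp (-2*w) := by
  have h := aux_log_bound (Real.exp_pos (-w)).le (aux_exp_half hw)
  have : Real.exp (-w) ^ 2 = Real.exp (-2*w) := by
    rw [sq, ← Real.exp_add]; ring_nf
  linarith [this ▸ h]

lemma aux_deriv {w : ℝ} (hw : 0 < w) :
    HasDerivAt (fun w : ℝ => w * Real.log (1 - Real.exp (-w)))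
      (Real.log (1 - Real.exp (-w)) + w / (Real.exp w - 1)) w := by
  have he1 : Real.exp (-w) < 1 := by
    rw [Real.exp_lt_one_iff]; linarith
  have hne : 1 - Real.exp (-w) ≠ 0 := by linarith [he1]
  have h1 : HasDerivAt (fun w : ℝ => 1 - Real.exp (-w)) (Real.exp (-w)) w := by
    have := ((hasDerivAt_neg w).exp).const_sub (1:ℝ)
    simpa using this
  have h2 : HasDerivAt (fun w : ℝ => Real.log (1 - Real.exp (-w)))
      (Real.exp (-w) / (1 - Real.exp (-w))) w := h1.log hne
  have h3 := (hasDerivAt_id w).mul h2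
  have heq : Real.exp (-w) / (1 - Real.exp (-w)) = 1 / (Real.exp w - 1) := by
    rw [Real.exp_neg]
    have h4 : (1:ℝ) < Real.exp w := by rw [← Real.exp_zero]; exact Real.exp_lt_exp.2 hw
    field_simp
  convert h3 using 1
  · rfl
  · rfl
  · rfl
  rw [heq]; simp only [id_eq, one_mul]; ring

lemma aux_tendsto : Filter.Tendsto (fun w : ℝ => w * Real.log (1 - Real.exp (-w)))
    atTop (nhds 0) := by
  have hlow : Filter.Tendsto (fun w : ℝ => -2 * (w ^ 1 * Real.exp (-w))) atTop (nhds 0) := by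
    have := (Real.tendsto_pow_mul_exp_neg_atTop_nhds_zero 1).const_mul (-2 : ℝ)
    simpa using this
  refine tendsto_of_tendsto_of_tendsto_of_le_of_le' hlow tendsto_const_nhds ?_ ?_
  · filter_upwards [eventually_ge_atTop (1:ℝ)] with w hw
    have hx2 : Real.exp (-w) ≤ 1/2 := aux_exp_half hw
    have h := aux_log_bound (Real.exp_pos (-w)).le hx2
    have hb : -(2 * Real.exp (-w)) ≤ Real.log (1 - Real.exp (-w)) := by
      rw [abs_le] at h; nlinarith [Real.exp_pos (-w)]
    have hw0 : (0:ℝ) ≤ w := by linarith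
    calc -2 * (w ^ 1 * Real.exp (-w)) = w * (-(2 * Real.exp (-w))) := by ring
      _ ≤ w * Real.log (1 - Real.exp (-w)) := by
          exact mul_le_mul_of_nonneg_left hb hw0
  · filter_upwards [eventually_ge_atTop (1:ℝ)] with w hw
    have hx2 : Real.exp (-w) ≤ 1/2 := aux_exp_half hw
    have hlog : Real.log (1 - Real.exp (-w)) ≤ 0 :=
      Real.log_nonpos (by linarith [Real.exp_pos (-w)]) (by linarith [Real.exp_pos (-w)])
    have hw0 : (0:ℝ) ≤ w := by linarith
    exact mul_nonpos_of_nonneg_of_nonpos hw0 hlog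

lemma aux_int_exp2 (y : ℝ) :
    ∫ w in Ioi y, Real.exp (-2*w) = Real.exp (-2*y) / 2 := by
  have hderiv : ∀ x ∈ Ioi y, HasDerivAt (fun w : ℝ => -Real.exp (-2*w) / 2)
      (Real.exp (-2*x)) x := by
    intro x _
    have h := (((hasDerivAt_id x).const_mul (-2:ℝ)).exp).neg.div_const (2:ℝ)
    convert h using 1
    · rfl
    · rfl
    · rfl
    simp only [id_eq, mul_one]; ring
  have htend : Filter.Tendsto (fun w : ℝ => -Real.exp (-2*w) / 2) atTop (nhds 0) := by
    have h1 : Filter.Tendsto (fun w : ℝ => -2 * w) atTop atBot :=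
      Filter.tendsto_id.const_mul_atTop_of_neg (by norm_num)
    have := ((Real.tendsto_exp_atBot.comp h1).neg).div_const (2:ℝ)
    simpa using this
  have hint : IntegrableOn (fun w : ℝ => Real.exp (-2*w)) (Ioi y) :=
    exp_neg_integrableOn_Ioi y two_pos
  have hcont : ContinuousWithinAt (fun w : ℝ => -Real.exp (-2*w) / 2) (Ici y) y :=
    (Continuous.continuousAt (by continuity)).continuousWithinAt
  have := MeasureTheory.integral_Ioi_of_hasDerivAt_of_tendsto hcont hderiv hint htend
  rw [this]; ring

lemma aux_int_log {y : ℝ} (hy : 1 ≤ y) :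
    IntegrableOn (fun w : ℝ => Real.log (1 - Real.exp (-w))) (Ioi y) := by
  refine integrable_of_isBigO_exp_neg (one_pos) ?_ ?_
  · apply ContinuousOn.log
    · exact (continuous_const.sub (Real.continuous_exp.comp continuous_neg)).continuousOn
    · intro w hw
      have hw1 : (1:ℝ) ≤ w := le_trans hy hw
      have := aux_exp_half hw1
      intro hc; nlinarith [Real.exp_pos (-w)]
  · rw [Asymptotics.isBigO_iff]
    refine ⟨2, ?_⟩
    filter_upwards [eventually_ge_atTop (1:ℝ)] with w hw
    have hx2 : Real.exp (-w) ≤ 1/2 := aux_exp_half hw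
    have h := aux_log_bound (Real.exp_pos (-w)).le hx2
    have hlog : Real.log (1 - Real.exp (-w)) ≤ 0 :=
      Real.log_nonpos (by linarith [Real.exp_pos (-w)]) (by linarith [Real.exp_pos (-w)])
    rw [Real.norm_eq_abs, Real.norm_eq_abs, abs_of_nonpos hlog,
      abs_of_pos (Real.exp_pos _), neg_one_mul]
    rw [abs_le] at h
    nlinarith [Real.exp_pos (-w)]

lemma aux_int_main {y : ℝ} (hy : 1 ≤ y) :
    IntegrableOn (fun w : ℝ => w / (Real.exp w - 1)) (Ioi y) := by
  refine integrable_of_isBigO_exp_neg (b := 1/2) (by norm_num) ?_ ?_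
  · apply ContinuousOn.div continuousOn_id
      ((Real.continuous_exp.sub continuous_const).continuousOn)
    intro w hw
    have hw1 : (1:ℝ) ≤ w := le_trans hy hw
    have : (1:ℝ) < Real.exp w := by
      rw [← Real.exp_zero]; exact Real.exp_lt_exp.2 (by linarith)
    intro hc; simp only [Pi.sub_apply] at hc; nlinarith
  · rw [Asymptotics.isBigO_iff]
    refine ⟨4, ?_⟩
    filter_upwards [eventually_ge_atTop (1:ℝ)] with w hw
    have he2 : (2:ℝ) ≤ Real.exp w := by
      have h2 : (2:ℝ) ≤ Real.exp 1 := by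
        have := Real.add_one_le_exp (1:ℝ); linarith
      linarith [Real.exp_le_exp.2 hw]
    have hpos : (0:ℝ) < Real.exp w - 1 := by linarith
    have hwle : w ≤ 2 * Real.exp (w/2) := by
      have := Real.add_one_le_exp (w/2); linarith
    have hprod : Real.exp (-(1/2) * w) * Real.exp w = Real.exp (w/2) := by
      rw [← Real.exp_add]; ring_nf
    rw [Real.norm_eq_abs, Real.norm_eq_abs, abs_of_pos (Real.exp_pos _),
      abs_of_nonneg (by positivity : (0:ℝ) ≤ w / (Real.exp w - 1))]
    rw [div_le_iff₀ hpos]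
    nlinarith [Real.exp_pos (-(1/2) * w), Real.exp_pos (w/2)]

open Filter in
/-- As `y → ∞`, `∫_y^∞ w/(e^w - 1) dw = -y log(1 - e^{-y}) + e^{-y} + O(e^{-2y})`. -/
theorem stmt_11 :
    (fun y : ℝ => (∫ w in Set.Ioi y, w / (Real.exp w - 1)) -
        (-y * Real.log (1 - Real.exp (-y)) + Real.exp (-y))) =O[atTop]
      fun y : ℝ => Real.exp (-2 * y) := by
  rw [Asymptotics.isBigO_iff]
  refine ⟨1, ?_⟩
  filter_upwards [eventually_ge_atTop (1:ℝ)] with y hy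
  have hy0 : (0:ℝ) < y := by linarith
  have hB : IntegrableOn (fun w : ℝ => Real.log (1 - Real.exp (-w))) (Ioi y) :=
    aux_int_log hy
  have hC : IntegrableOn (fun w : ℝ => w / (Real.exp w - 1)) (Ioi y) :=
    aux_int_main hy
  have hE : IntegrableOn (fun w : ℝ => Real.exp (-w)) (Ioi y) := by
    have := exp_neg_integrableOn_Ioi y one_pos; simpa using this
  have hE2 : IntegrableOn (fun w : ℝ => 2 * Real.exp (-2*w)) (Ioi y) :=
    (exp_neg_integrableOn_Ioi y two_pos).const_mul 2
  -- FTC / integration by parts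
  have key : (∫ w in Ioi y, (Real.log (1 - Real.exp (-w)) + w / (Real.exp w - 1)))
      = 0 - y * Real.log (1 - Real.exp (-y)) := by
    refine MeasureTheory.integral_Ioi_of_hasDerivAt_of_tendsto
      ((aux_deriv hy0).continuousAt.continuousWithinAt)
      (fun x hx => aux_deriv (lt_trans hy0 hx)) (hB.add hC) aux_tendsto
  rw [MeasureTheory.integral_add hB hC] at key
  have hexp : (∫ w in Ioi y, Real.exp (-w)) = Real.exp (-y) :=
    integral_exp_neg_Ioi y
  -- rewrite the difference as the negative of a remainder integral
  have hrem : (∫ w in Set.Ioi y, w / (Real.exp w - 1)) -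
      (-y * Real.log (1 - Real.exp (-y)) + Real.exp (-y))
      = -(∫ w in Ioi y, (Real.log (1 - Real.exp (-w)) + Real.exp (-w))) := by
    rw [MeasureTheory.integral_add hB hE, hexp]
    linarith [key]
  rw [hrem]
  -- bound the remainder
  have hbound : ‖∫ w in Ioi y, (Real.log (1 - Real.exp (-w)) + Real.exp (-w))‖
      ≤ Real.exp (-2*y) := by
    calc ‖∫ w in Ioi y, (Real.log (1 - Real.exp (-w)) + Real.exp (-w))‖
        ≤ ∫ w in Ioi y, ‖Real.log (1 - Real.exp (-w)) + Real.exp (-w)‖ :=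
          MeasureTheory.norm_integral_le_integral_norm _
      _ ≤ ∫ w in Ioi y, 2 * Real.exp (-2*w) := by
          refine MeasureTheory.setIntegral_mono_on (hB.add hE).norm hE2
            measurableSet_Ioi (fun w hw => ?_)
          exact aux_pt_bound (le_trans hy (le_of_lt hw))
      _ = Real.exp (-2*y) := by
          rw [MeasureTheory.integral_const_mul, aux_int_exp2]; ring
  rw [norm_neg]
  calc ‖∫ w in Ioi y, (Real.log (1 - Real.exp (-w)) + Real.exp (-w))‖
      ≤ Real.exp (-2*y) := hbound
    _ = 1 * ‖Real.exp (-2*y)‖ := by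
        rw [Real.norm_eq_abs, abs_of_pos (Real.exp_pos _), one_mul]
end
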